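/- For all x > 0, the Gaussian Q-function Q(x) = (1/√(2π))∫_x^∞ e^{-t²/2} dt admits the integral representation (Craig's formula): Q(x) = (1/π)∫₀^{π/2} exp(-x²/(2 sin²θ)) dθ. -/

import Mathlib

open Real MeasureTheory Set intervalIntegral

/-- The Gaussian Q-function. -/
noncomputable def gaussQ (x : ℝ) : ℝ :=
  (1 / Real.sqrt (2 * Real.pi)) * ∫ t in Ioi x, Real.exp (-t ^ 2 / 2)

section aux

lemma craig_hasDeriv (t : ℝ) :
    HasDerivAt (fun t : ℝ => -Real.exp (-t ^ 2 / 2)) (t * Real.exp (-t ^ 2 / 2)) t := by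
  have h0 : HasDerivAt (fun t : ℝ => -t ^ 2 / 2) (-t) t := by
    have := ((hasDerivAt_pow 2 t).neg.div_const 2)
    exact this.congr_deriv (by simp; ring)
  have := (h0.exp).neg
  exact this.congr_deriv (by ring)

lemma craig_tendsto :
    Filter.Tendsto (fun t : ℝ => -Real.exp (-t ^ 2 / 2)) Filter.atTop (nhds 0) := by
  have h : Filter.Tendsto (fun t : ℝ => -t ^ 2 / 2) Filter.atTop Filter.atBot := by
    apply Filter.Tendsto.atBot_div_const (by norm_num)
    simpa using (Filter.tendsto_pow_atTop (n := 2) (by norm_num)).neg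
  simpa using (Real.tendsto_exp_atBot.comp h).neg

lemma craig_cont (a : ℝ) :
    ContinuousWithinAt (fun t : ℝ => -Real.exp (-t ^ 2 / 2)) (Ici a) a :=
  ((Real.continuous_exp.comp (by continuity)).neg).continuousWithinAt

lemma craig_nonneg {a : ℝ} (ha : 0 ≤ a) :
    ∀ t ∈ Ioi a, 0 ≤ t * Real.exp (-t ^ 2 / 2) := by
  intro t ht
  have : 0 < t := lt_of_le_of_lt ha ht
  positivity

lemma aux_int {a : ℝ} (ha : 0 ≤ a) :
    ∫ t in Ioi a, t * Real.exp (-t ^ 2 / 2) = Real.exp (-a ^ 2 / 2) := by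
  have := integral_Ioi_of_hasDerivAt_of_nonneg (g := fun t : ℝ => -Real.exp (-t ^ 2 / 2))
    (a := a) (l := 0) (craig_cont a) (fun t _ => craig_hasDeriv t) (craig_nonneg ha)
    craig_tendsto
  simpa using this

lemma aux_integrable {a : ℝ} (ha : 0 ≤ a) :
    IntegrableOn (fun t : ℝ => t * Real.exp (-t ^ 2 / 2)) (Ioi a) :=
  integrableOn_Ioi_deriv_of_nonneg (craig_cont a) (fun t _ => craig_hasDeriv t)
    (craig_nonneg ha) craig_tendsto

end aux

/-- Craig's formula: for all `x > 0`,
`Q(x) = (1/π) ∫₀^{π/2} exp(-x²/(2 sin²θ)) dθ`. -/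
theorem stmt_12 (x : ℝ) (hx : 0 < x) :
    gaussQ x = (1 / Real.pi) * ∫ θ in (0 : ℝ)..(Real.pi / 2),
      Real.exp (-x ^ 2 / (2 * Real.sin θ ^ 2)) := by
  set J : ℝ := ∫ t in Ioi x, Real.exp (-t ^ 2 / 2) with hJ
  set h : ℝ → ℝ := fun θ => Real.exp (-x ^ 2 / (2 * Real.sin θ ^ 2)) with hh
  set I : ℝ := ∫ θ in (0 : ℝ)..(Real.pi / 2), h θ with hI
  set f : ℝ × ℝ → ℝ :=
    fun p => Real.exp (-p.1 ^ 2 / 2) * (Ioi x).indicator (fun v => Real.exp (-v ^ 2 / 2)) p.2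
    with hf
  -- the full-space integral of f
  have hfull : (∫ p : ℝ × ℝ, f p) = Real.sqrt (2 * Real.pi) * J := by
    simp only [hf]
    rw [Measure.volume_eq_prod ℝ ℝ]
    have hprod : (∫ p : ℝ × ℝ, Real.exp (-p.1 ^ 2 / 2) *
          (Ioi x).indicator (fun v => Real.exp (-v ^ 2 / 2)) p.2
          ∂(volume : Measure ℝ).prod (volume : Measure ℝ))
        = (∫ u : ℝ, Real.exp (-u ^ 2 / 2)) *
          ∫ v : ℝ, (Ioi x).indicator (fun v => Real.exp (-v ^ 2 / 2)) v :=
      integral_prod_mul (f := fun u : ℝ => Real.exp (-u ^ 2 / 2))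
        (g := fun v : ℝ => (Ioi x).indicator (fun v => Real.exp (-v ^ 2 / 2)) v)
    rw [hprod]
    congr 1
    · have h1 : (fun u : ℝ => Real.exp (-u ^ 2 / 2)) =
          fun u : ℝ => Real.exp (-(1/2 : ℝ) * u ^ 2) := by
        funext u; ring_nf
      rw [h1, integral_gaussian]
      congr 1
      rw [div_div_eq_mul_div, div_one, mul_comm]
    · rw [MeasureTheory.integral_indicator measurableSet_Ioi]
  -- measurability of f
  have hfmeas : Measurable f := by
    apply Measurable.mul
    · fun_prop
    · exact (Measurable.indicator (by fun_prop) measurableSet_Ioi).comp measurable_snd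
  -- polar coordinates
  have hpolar : (∫ p in polarCoord.target, p.1 • f (polarCoord.symm p)) = ∫ p : ℝ × ℝ, f p :=
    integral_comp_polarCoord_symm f
  -- the function in polar coordinates
  set F : ℝ × ℝ → ℝ := fun p => p.1 * f (p.1 * Real.cos p.2, p.1 * Real.sin p.2) with hF
  have hFpolar : (∫ p in polarCoord.target, p.1 • f (polarCoord.symm p)) =
      ∫ p in Ioi (0:ℝ) ×ˢ Ioo (-Real.pi) Real.pi, F p := by
    rfl
  -- pointwise bound
  have hFbound : ∀ p : ℝ × ℝ, ‖F p‖ ≤ |p.1| * Real.exp (-p.1 ^ 2 / 2) := by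
    intro ⟨r, θ⟩
    have hsq : (r * Real.cos θ) ^ 2 + (r * Real.sin θ) ^ 2 = r ^ 2 := by
      nlinarith [Real.sin_sq_add_cos_sq θ]
    have hind : (Ioi x).indicator (fun v => Real.exp (-v ^ 2 / 2)) (r * Real.sin θ) ≤
        Real.exp (-(r * Real.sin θ) ^ 2 / 2) := by
      by_cases hmem : r * Real.sin θ ∈ Ioi x
      · rw [indicator_of_mem hmem]
      · rw [indicator_of_notMem hmem]; positivity
    have hind0 : 0 ≤ (Ioi x).indicator (fun v => Real.exp (-v ^ 2 / 2)) (r * Real.sin θ) := by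
      by_cases hmem : r * Real.sin θ ∈ Ioi x
      · rw [indicator_of_mem hmem]; positivity
      · rw [indicator_of_notMem hmem]
    have hmul : Real.exp (-(r * Real.cos θ) ^ 2 / 2) *
        Real.exp (-(r * Real.sin θ) ^ 2 / 2) = Real.exp (-r ^ 2 / 2) := by
      rw [← Real.exp_add, ← hsq]; ring_nf
    have h1 : ‖F (r, θ)‖ = |r| * |Real.exp (-(r * Real.cos θ) ^ 2 / 2) *
        (Ioi x).indicator (fun v => Real.exp (-v ^ 2 / 2)) (r * Real.sin θ)| := by
      rw [hF, hf]; exact abs_mul _ _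
    rw [h1, abs_of_nonneg (mul_nonneg (Real.exp_pos _).le hind0)]
    calc |r| * (Real.exp (-(r * Real.cos θ) ^ 2 / 2) *
          (Ioi x).indicator (fun v => Real.exp (-v ^ 2 / 2)) (r * Real.sin θ))
        ≤ |r| * (Real.exp (-(r * Real.cos θ) ^ 2 / 2) * Real.exp (-(r * Real.sin θ) ^ 2 / 2)) := by
          apply mul_le_mul_of_nonneg_left _ (abs_nonneg r)
          exact mul_le_mul_of_nonneg_left hind (Real.exp_pos _).le
      _ = |r| * Real.exp (-r ^ 2 / 2) := by rw [hmul]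
  -- integrability of F on the product
  have hFint : Integrable F ((volume.restrict (Ioi (0:ℝ))).prod
      (volume.restrict (Ioo (-Real.pi) Real.pi))) := by
    apply Integrable.mono' (g := fun p : ℝ × ℝ => |p.1| * Real.exp (-p.1 ^ 2 / 2))
    · have hg : Integrable (fun r : ℝ => |r| * Real.exp (-r ^ 2 / 2))
          (volume.restrict (Ioi (0:ℝ))) := by
        apply (aux_integrable le_rfl).congr_fun _ measurableSet_Ioi
        intro r hr
        simp [abs_of_pos (mem_Ioi.mp hr)]
      have hc : Integrable (fun _ : ℝ => (1:ℝ))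
          (volume.restrict (Ioo (-Real.pi) Real.pi)) := integrable_const 1
      have := hg.mul_prod hc
      simpa using this
    · apply Measurable.aestronglyMeasurable
      apply Measurable.mul measurable_fst
      exact hfmeas.comp (by fun_prop)
    · exact Filter.Eventually.of_forall hFbound
  -- Fubini
  have hswap : (∫ p in Ioi (0:ℝ) ×ˢ Ioo (-Real.pi) Real.pi, F p) =
      ∫ θ in Ioo (-Real.pi) Real.pi, ∫ r in Ioi (0:ℝ), F (r, θ) := by
    rw [Measure.volume_eq_prod, ← Measure.prod_restrict]
    exact integral_prod_symm F hFint
  -- inner integral evaluation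
  have hinner : ∀ θ ∈ Ioo (-Real.pi) Real.pi,
      (∫ r in Ioi (0:ℝ), F (r, θ)) = (Ioo (0:ℝ) Real.pi).indicator h θ := by
    intro θ hθ
    by_cases hs : 0 < Real.sin θ
    · have hθmem : θ ∈ Ioo (0:ℝ) Real.pi := by
        constructor
        · by_contra hle
          push_neg at hle
          exact absurd (Real.sin_nonpos_of_nonpos_of_neg_pi_le hle hθ.1.le) (not_le.mpr hs)
        · exact hθ.2
      rw [indicator_of_mem hθmem]
      have hxs : 0 < x / Real.sin θ := div_pos hx hs
      have hEq : EqOn (fun r => F (r, θ))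
          ((Ioi (x / Real.sin θ)).indicator (fun r => r * Real.exp (-r ^ 2 / 2)))
          (Ioi (0:ℝ)) := by
        intro r hr
        have hr0 : 0 < r := mem_Ioi.mp hr
        by_cases hmem : x / Real.sin θ < r
        · have hxr : x < r * Real.sin θ := (div_lt_iff₀ hs).mp hmem
          simp only [hF, hf, indicator_of_mem (mem_Ioi.mpr hxr),
            indicator_of_mem (mem_Ioi.mpr hmem)]
          rw [← mul_assoc, mul_assoc r, ← Real.exp_add]
          congr 1
          have : (r * Real.cos θ) ^ 2 + (r * Real.sin θ) ^ 2 = r ^ 2 := by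
            nlinarith [Real.sin_sq_add_cos_sq θ]
          rw [← this]; ring
        · have hxr : ¬ x < r * Real.sin θ := by
            intro hcon
            exact hmem ((div_lt_iff₀ hs).mpr hcon)
          simp only [hF, hf, indicator_of_notMem (fun hc => hxr (mem_Ioi.mp hc)),
            indicator_of_notMem (fun hc => hmem (mem_Ioi.mp hc))]
          ring
      rw [setIntegral_congr_fun measurableSet_Ioi hEq,
        setIntegral_indicator measurableSet_Ioi]
      have hIoi : Ioi (0:ℝ) ∩ Ioi (x / Real.sin θ) = Ioi (x / Real.sin θ) := by
        rw [Ioi_inter_Ioi, max_eq_right hxs.le]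
      rw [hIoi, aux_int hxs.le]
      congr 1
      field_simp
    · have hθnot : θ ∉ Ioo (0:ℝ) Real.pi := by
        intro hc
        exact hs (Real.sin_pos_of_pos_of_lt_pi hc.1 hc.2)
      rw [indicator_of_notMem hθnot]
      have hEq : EqOn (fun r => F (r, θ)) (fun _ => (0:ℝ)) (Ioi (0:ℝ)) := by
        intro r hr
        have hr0 : 0 < r := mem_Ioi.mp hr
        have : r * Real.sin θ ∉ Ioi x := by
          intro hc
          have : r * Real.sin θ ≤ 0 := mul_nonpos_of_nonneg_of_nonpos hr0.le (not_lt.mp hs)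
          exact absurd (lt_trans hx (mem_Ioi.mp hc)) (not_lt.mpr this)
        simp only [hF, hf, indicator_of_notMem this]
        ring
      rw [setIntegral_congr_fun measurableSet_Ioi hEq]
      simp
  -- collapse outer integral
  have houter : (∫ θ in Ioo (-Real.pi) Real.pi, ∫ r in Ioi (0:ℝ), F (r, θ)) =
      ∫ θ in Ioo (0:ℝ) Real.pi, h θ := by
    rw [setIntegral_congr_fun measurableSet_Ioo hinner,
      setIntegral_indicator measurableSet_Ioo]
    have h1 : -Real.pi ⊔ (0:ℝ) = 0 := max_eq_right (by linarith [Real.pi_pos])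
    have h2 : Real.pi ⊓ Real.pi = Real.pi := min_self _
    rw [Ioo_inter_Ioo, h1, h2]
  -- measurability & boundedness of h for interval integrability
  have hhmeas : Measurable h := by
    apply Real.measurable_exp.comp
    apply Measurable.div measurable_const
    fun_prop
  have hhbd : ∀ θ : ℝ, ‖h θ‖ ≤ 1 := by
    intro θ
    rw [hh, Real.norm_eq_abs, abs_of_pos (Real.exp_pos _)]
    rw [← Real.exp_zero]
    apply Real.exp_le_exp.mpr
    apply div_nonpos_of_nonpos_of_nonneg (neg_nonpos.mpr (by positivity))
    positivity
  have hhint : ∀ a b : ℝ, IntervalIntegrable h volume a b := by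
    intro a b
    rw [intervalIntegrable_iff]
    haveI : IsFiniteMeasure (volume.restrict (uIoc a b)) :=
      ⟨by rw [Measure.restrict_apply_univ]; exact measure_Ioc_lt_top⟩
    apply Integrable.mono' (integrable_const (1:ℝ)) hhmeas.aestronglyMeasurable
    exact Filter.Eventually.of_forall fun θ => hhbd θ
  -- symmetry: ∫_{Ioo 0 π} h = 2 I
  have hsym : (∫ θ in Ioo (0:ℝ) Real.pi, h θ) = 2 * I := by
    rw [← integral_Ioc_eq_integral_Ioo, ← intervalIntegral.integral_of_le Real.pi_pos.le]
    rw [← intervalIntegral.integral_add_adjacent_intervals (b := Real.pi / 2)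
      (hhint 0 (Real.pi / 2)) (hhint (Real.pi / 2) Real.pi)]
    have hrefl : (∫ θ in (Real.pi/2)..Real.pi, h θ) = I := by
      have hcomp := intervalIntegral.integral_comp_sub_left (a := (0:ℝ))
        (b := Real.pi / 2) h Real.pi
      have : ∀ θ : ℝ, h (Real.pi - θ) = h θ := by
        intro θ; rw [hh]; simp [Real.sin_pi_sub]
      simp only [this] at hcomp
      have e1 : Real.pi - Real.pi / 2 = Real.pi / 2 := by ring
      have e2 : Real.pi - 0 = Real.pi := by ring
      rw [e1, e2] at hcomp
      rw [hI, hcomp]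
    rw [hrefl, hI]
    ring
  -- put it all together
  have hkey : Real.sqrt (2 * Real.pi) * J = 2 * I := by
    rw [← hfull, ← hpolar, hFpolar, hswap, houter, hsym]
  have hs0 : (0:ℝ) < Real.sqrt (2 * Real.pi) := by positivity
  have hsq : Real.sqrt (2 * Real.pi) ^ 2 = 2 * Real.pi := Real.sq_sqrt (by positivity)
  have hπ : (0:ℝ) < Real.pi := Real.pi_pos
  have hPJ : Real.pi * J = Real.sqrt (2 * Real.pi) * I := by
    have h1 : Real.sqrt (2 * Real.pi) ^ 2 * J = 2 * (Real.sqrt (2 * Real.pi) * I) := by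
      rw [pow_two, mul_assoc, hkey]; ring
    rw [hsq] at h1
    linarith
  show (1 / Real.sqrt (2 * Real.pi)) * J = (1 / Real.pi) * I
  rw [div_mul_eq_mul_div, div_mul_eq_mul_div, one_mul, one_mul, div_eq_div_iff hs0.ne' hπ.ne']
  linarith [hPJ]
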